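/- For bounded linear operators A, B, X, Y on a complex Hilbert space, w(A*XB + B*YA) ≤ 2‖A‖‖B‖ · w(T), where T is the operator on H ⊕ H given by the 2×2 block matrix with zero diagonal entries, (1,2)-entry X, and (2,1)-entry Y. -/

import Mathlib

open scoped InnerProductSpace
open ContinuousLinearMap Metric

/-- The numerical radius of a bounded operator on a complex Hilbert space. -/
noncomputable def numRadius {H : Type*} [NormedAddCommGroup H] [InnerProductSpace ℂ H]
    (T : H →L[ℂ] H) : ℝ :=
  sSup {r : ℝ | ∃ x : H, ‖x‖ = 1 ∧ r = ‖(inner ℂ (T x) x : ℂ)‖}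

/-- The block operator `[[0, X], [Y, 0]]` acting on `H ⊕ H` (with the `ℓ²` Hilbert space
structure) by `(x, y) ↦ (X y, Y x)`. -/
noncomputable def blockOp {H : Type*} [NormedAddCommGroup H] [InnerProductSpace ℂ H]
    (X Y : H →L[ℂ] H) : WithLp 2 (H × H) →L[ℂ] WithLp 2 (H × H) :=
  ((WithLp.prodContinuousLinearEquiv 2 ℂ H H).symm.toContinuousLinearMap) ∘L
    ((X ∘L ContinuousLinearMap.snd ℂ H H).prod (Y ∘L ContinuousLinearMap.fst ℂ H H)) ∘L
    ((WithLp.prodContinuousLinearEquiv 2 ℂ H H).toContinuousLinearMap)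

/-- `A` is a `G₁` operator: `‖(z - A)⁻¹‖ = 1 / dist (z, σ(A))` for all `z ∉ σ(A)`. -/
def IsG1 {H : Type*} [NormedAddCommGroup H] [InnerProductSpace ℂ H] [CompleteSpace H]
    (A : H →L[ℂ] H) : Prop :=
  ∀ z : ℂ, z ∉ spectrum ℂ A →
    ‖Ring.inverse (algebraMap ℂ (H →L[ℂ] H) z - A)‖ = 1 / Metric.infDist z (spectrum ℂ A)

/-- The distance between two subsets of `ℂ`. -/
noncomputable def setDist (s t : Set ℂ) : ℝ :=
  sInf {d : ℝ | ∃ z ∈ s, ∃ w ∈ t, d = dist z w}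

/-- The Riesz–Dunford functional calculus `f(A)` for `f` analytic on the unit disk and
`σ(A) ⊂ 𝔻`, realized through the Taylor expansion of `f` at `0`. -/
noncomputable def dunford {H : Type*} [NormedAddCommGroup H] [InnerProductSpace ℂ H]
    [CompleteSpace H] (f : ℂ → ℂ) (A : H →L[ℂ] H) : H →L[ℂ] H :=
  ∑' n : ℕ, (iteratedDeriv n f 0 / n.factorial) • A ^ n

/-- The modulus `|C| = (C*C)^{1/2}` of a bounded operator. -/
noncomputable def opAbs {H : Type*} [NormedAddCommGroup H] [InnerProductSpace ℂ H]
    [CompleteSpace H] (C : H →L[ℂ] H) : H →L[ℂ] H :=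
  CFC.sqrt (ContinuousLinearMap.adjoint C * C)

lemma numRadius_bddAbove {H : Type*} [NormedAddCommGroup H] [InnerProductSpace ℂ H]
    (T : H →L[ℂ] H) : BddAbove {r : ℝ | ∃ x : H, ‖x‖ = 1 ∧ r = ‖(inner ℂ (T x) x : ℂ)‖} := by
  refine ⟨‖T‖, fun r hr => ?_⟩
  obtain ⟨x, hx, rfl⟩ := hr
  calc ‖(inner ℂ (T x) x : ℂ)‖ ≤ ‖T x‖ * ‖x‖ := norm_inner_le_norm _ _
    _ ≤ (‖T‖ * ‖x‖) * ‖x‖ := by gcongr; exact T.le_opNorm x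
    _ = ‖T‖ := by rw [hx]; ring

lemma numRadius_nonneg {H : Type*} [NormedAddCommGroup H] [InnerProductSpace ℂ H]
    (T : H →L[ℂ] H) : 0 ≤ numRadius T := by
  rcases Set.eq_empty_or_nonempty {r : ℝ | ∃ x : H, ‖x‖ = 1 ∧ r = ‖(inner ℂ (T x) x : ℂ)‖} with h | h
  · rw [numRadius, h, Real.sSup_empty]
  · obtain ⟨r, hr⟩ := h
    refine le_trans ?_ (le_csSup (numRadius_bddAbove T) hr)
    obtain ⟨x, hx, rfl⟩ := hr
    positivity

lemma inner_le_numRadius {H : Type*} [NormedAddCommGroup H] [InnerProductSpace ℂ H]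
    (T : H →L[ℂ] H) (v : H) : ‖(inner ℂ (T v) v : ℂ)‖ ≤ numRadius T * ‖v‖ ^ 2 := by
  rcases eq_or_ne v 0 with rfl | hv
  · simp
  · have hvn : (0 : ℝ) < ‖v‖ := norm_pos_iff.2 hv
    set c : ℂ := (‖v‖ : ℂ)⁻¹ with hc
    have hunit : ‖c • v‖ = 1 := by
      rw [norm_smul, hc, norm_inv]
      simp [hvn.ne']
    have key : ‖(inner ℂ (T (c • v)) (c • v) : ℂ)‖ ≤ numRadius T :=
      le_csSup (numRadius_bddAbove T) ⟨c • v, hunit, rfl⟩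
    have hcomp : (inner ℂ (T (c • v)) (c • v) : ℂ) = (starRingEnd ℂ c) * c * inner ℂ (T v) v := by
      rw [map_smul, inner_smul_left, inner_smul_right]; ring
    rw [hcomp] at key
    have hcc : ‖(starRingEnd ℂ c) * c‖ = (‖v‖ ^ 2)⁻¹ := by
      rw [norm_mul, RCLike.norm_conj, hc, norm_inv, Complex.norm_real,
        Real.norm_of_nonneg hvn.le, sq, mul_inv]
    rw [norm_mul, hcc] at key
    calc ‖(inner ℂ (T v) v : ℂ)‖ = ((‖v‖ ^ 2)⁻¹ * ‖(inner ℂ (T v) v : ℂ)‖) * ‖v‖ ^ 2 := by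
          field_simp
      _ ≤ numRadius T * ‖v‖ ^ 2 := mul_le_mul_of_nonneg_right key (sq_nonneg _)

theorem stmt3 {H : Type*} [NormedAddCommGroup H] [InnerProductSpace ℂ H] [CompleteSpace H] (A B X Y : H →L[ℂ] H) :
    numRadius (ContinuousLinearMap.adjoint A * X * B + ContinuousLinearMap.adjoint B * Y * A) ≤
      2 * ‖A‖ * ‖B‖ * numRadius (blockOp X Y) := by
  have hRHS : 0 ≤ 2 * ‖A‖ * ‖B‖ * numRadius (blockOp X Y) := by
    have := numRadius_nonneg (blockOp X Y)
    positivity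
  refine Real.sSup_le (fun r hr => ?_) hRHS
  obtain ⟨x, hx, rfl⟩ := hr
  rcases eq_or_ne A 0 with rfl | hA
  · simp
  rcases eq_or_ne B 0 with rfl | hB
  · simp
  have hAn : (0 : ℝ) < ‖A‖ := norm_pos_iff.2 hA
  have hBn : (0 : ℝ) < ‖B‖ := norm_pos_iff.2 hB
  set t : ℝ := Real.sqrt (‖B‖ / ‖A‖) with ht
  have htpos : 0 < t := Real.sqrt_pos.2 (by positivity)
  have ht2 : t ^ 2 = ‖B‖ / ‖A‖ := Real.sq_sqrt (by positivity)
  set v : WithLp 2 (H × H) :=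
    (WithLp.prodContinuousLinearEquiv 2 ℂ H H).symm ((t : ℂ) • A x, ((t : ℂ)⁻¹) • B x) with hv
  have hv1 : v.fst = (t : ℂ) • A x := rfl
  have hv2 : v.snd = ((t : ℂ)⁻¹) • B x := rfl
  have hTv1 : (blockOp X Y v).fst = X v.snd := rfl
  have hTv2 : (blockOp X Y v).snd = Y v.fst := rfl
  have htne : (t : ℂ) ≠ 0 := by exact_mod_cast htpos.ne'
  have hinner : (inner ℂ (blockOp X Y v) v : ℂ) =
      inner ℂ ((ContinuousLinearMap.adjoint A * X * B + ContinuousLinearMap.adjoint B * Y * A) x) x := by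
    rw [WithLp.prod_inner_apply, WithLp.ofLp_fst, WithLp.ofLp_snd, WithLp.ofLp_fst, WithLp.ofLp_snd, hTv1, hTv2, hv1, hv2]
    simp only [map_smul, inner_smul_left, inner_smul_right, Complex.conj_ofReal,
      map_inv₀]
    rw [ContinuousLinearMap.add_apply, inner_add_left]
    simp only [ContinuousLinearMap.mul_apply]
    rw [ContinuousLinearMap.adjoint_inner_left, ContinuousLinearMap.adjoint_inner_left]
    field_simp
  have hnormv : ‖v‖ ^ 2 ≤ 2 * ‖A‖ * ‖B‖ := by
    rw [WithLp.prod_norm_sq_eq_of_L2, hv1, hv2]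
    have h1 : ‖(t : ℂ) • A x‖ ^ 2 ≤ t ^ 2 * ‖A‖ ^ 2 := by
      rw [norm_smul]
      have : ‖A x‖ ≤ ‖A‖ := by simpa [hx] using A.le_opNorm x
      calc (‖(t : ℂ)‖ * ‖A x‖) ^ 2 = ‖(t : ℂ)‖ ^ 2 * ‖A x‖ ^ 2 := by ring
        _ ≤ ‖(t : ℂ)‖ ^ 2 * ‖A‖ ^ 2 := by gcongr
        _ = t ^ 2 * ‖A‖ ^ 2 := by rw [Complex.norm_real, Real.norm_of_nonneg htpos.le]
    have h2 : ‖((t : ℂ)⁻¹) • B x‖ ^ 2 ≤ t⁻¹ ^ 2 * ‖B‖ ^ 2 := by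
      rw [norm_smul]
      have : ‖B x‖ ≤ ‖B‖ := by simpa [hx] using B.le_opNorm x
      calc (‖(t : ℂ)⁻¹‖ * ‖B x‖) ^ 2 = ‖(t : ℂ)⁻¹‖ ^ 2 * ‖B x‖ ^ 2 := by ring
        _ ≤ ‖(t : ℂ)⁻¹‖ ^ 2 * ‖B‖ ^ 2 := by gcongr
        _ = t⁻¹ ^ 2 * ‖B‖ ^ 2 := by
            rw [norm_inv, Complex.norm_real, Real.norm_of_nonneg htpos.le]
    calc ‖v.fst‖ ^ 2 + ‖v.snd‖ ^ 2 ≤ t ^ 2 * ‖A‖ ^ 2 + t⁻¹ ^ 2 * ‖B‖ ^ 2 := by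
          rw [hv1, hv2]; exact add_le_add h1 h2
      _ = 2 * ‖A‖ * ‖B‖ := by
          rw [inv_pow, ht2]
          field_simp
          ring
  calc ‖(inner ℂ ((ContinuousLinearMap.adjoint A * X * B + ContinuousLinearMap.adjoint B * Y * A) x) x : ℂ)‖
      = ‖(inner ℂ (blockOp X Y v) v : ℂ)‖ := by rw [hinner]
    _ ≤ numRadius (blockOp X Y) * ‖v‖ ^ 2 := inner_le_numRadius _ _
    _ ≤ numRadius (blockOp X Y) * (2 * ‖A‖ * ‖B‖) := by
        gcongr; exact numRadius_nonneg _
    _ = 2 * ‖A‖ * ‖B‖ * numRadius (blockOp X Y) := by ring
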